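/- The map (sigma, m) -> sigma{m} := (sigma')^{-1} m + ((C D')_0 ; (A B')_0) defines an action of Sp(g, F_2) on F_2^{2g}, i.e. (sigma tau){m} = sigma{tau{m}} for all sigma, tau in Sp(g, F_2) and m in F_2^{2g}. -/

import Mathlib

open Matrix BigOperators

/-- A characteristic: a vector in `F₂^{2g}`, indexed by `Fin g ⊕ Fin g`
(the first block is `a`, the second is `b`). -/
abbrev Char2 (g : ℕ) := (Fin g ⊕ Fin g) → ZMod 2

/-- The `a`-part of a characteristic. -/
def aPart {g : ℕ} (m : Char2 g) : Fin g → ZMod 2 := fun i => m (Sum.inl i)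

/-- The `b`-part of a characteristic. -/
def bPart {g : ℕ} (m : Char2 g) : Fin g → ZMod 2 := fun i => m (Sum.inr i)

/-- A characteristic `m = (a;b)` is even if `a'b = 0`. -/
def IsEvenChar {g : ℕ} (m : Char2 g) : Prop := aPart m ⬝ᵥ bPart m = 0

/-- A characteristic `m = (a;b)` is odd if `a'b = 1`. -/
def IsOddChar {g : ℕ} (m : Char2 g) : Prop := aPart m ⬝ᵥ bPart m = 1

instance {g : ℕ} : DecidablePred (IsEvenChar (g := g)) := fun m => by
  unfold IsEvenChar; infer_instance

instance {g : ℕ} : DecidablePred (IsOddChar (g := g)) := fun m => by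
  unfold IsOddChar; infer_instance

/-- The type of `2g × 2g` matrices over `F₂`. -/
abbrev SpMat (g : ℕ) := Matrix (Fin g ⊕ Fin g) (Fin g ⊕ Fin g) (ZMod 2)

/-- The offset `((CD')₀ ; (AB')₀)` appearing in the affine action. -/
def offVec {g : ℕ} (σ : SpMat g) : Char2 g :=
  Sum.elim (Matrix.diag (σ.toBlocks₂₁ * (σ.toBlocks₂₂)ᵀ))
           (Matrix.diag (σ.toBlocks₁₁ * (σ.toBlocks₁₂)ᵀ))

/-- The affine action `σ{m} = (σ')⁻¹ m + ((CD')₀ ; (AB')₀)`. -/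
noncomputable def affAct {g : ℕ} (σ : SpMat g) (m : Char2 g) : Char2 g :=
  (σᵀ)⁻¹ *ᵥ m + offVec σ

/-- The sign `(-1)^x` for `x : F₂`. -/
def sgn2 (x : ZMod 2) : ℤ := if x = 0 then 1 else -1

/-- The quadratic form `M[x] = x' M x`. -/
def quadF {g : ℕ} (M : Matrix (Fin g) (Fin g) (ZMod 2)) (x : Fin g → ZMod 2) : ZMod 2 :=
  x ⬝ᵥ (M *ᵥ x)

/-- `ε_m(σ) = (-1)^{tr(B'C) + (B'D)[a] + (A'C)[b]}`. -/
def epsChar {g : ℕ} (m : Char2 g) (σ : SpMat g) : ℤ :=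
  sgn2 (Matrix.trace ((σ.toBlocks₁₂)ᵀ * σ.toBlocks₂₁)
    + quadF ((σ.toBlocks₁₂)ᵀ * σ.toBlocks₂₂) (aPart m)
    + quadF ((σ.toBlocks₁₁)ᵀ * σ.toBlocks₂₁) (bPart m))

/-- The symplectic pairing `<m,n> = a'β + b'α`. -/
def pairing {g : ℕ} (m n : Char2 g) : ZMod 2 :=
  aPart m ⬝ᵥ bPart n + bPart m ⬝ᵥ aPart n

/-- `e(m,n) = (-1)^{<m,n>}`. -/
def eSign {g : ℕ} (m n : Char2 g) : ℤ := sgn2 (pairing m n)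


section AffineActionAux

open Finset

lemma mat_neg' {X Y : Type*} (M : Matrix X Y (ZMod 2)) : -M = M := by
  ext i j; exact CharTwo.neg_eq _

lemma mat_add_self' {X Y : Type*} (M : Matrix X Y (ZMod 2)) : M + M = 0 := by
  ext i j; exact CharTwo.add_self_eq_zero _

lemma sum_symm_char2' {n : Type*} [Fintype n] [DecidableEq n] (T : n → n → ZMod 2)
    (hT : ∀ k l, T k l = T l k) : (∑ k, ∑ l, T k l) = ∑ k, T k k := by
  classical
  have split : (∑ k, ∑ l, T k l)
      = (∑ k, ∑ l, if k = l then T k l else 0) + ∑ k, ∑ l, if k = l then 0 else T k l := by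
    rw [← Finset.sum_add_distrib]
    refine Finset.sum_congr rfl fun k _ => ?_
    rw [← Finset.sum_add_distrib]
    refine Finset.sum_congr rfl fun l _ => ?_
    split <;> simp
  have h0 : (∑ p : n × n, if p.1 = p.2 then 0 else T p.1 p.2) = 0 := by
    apply Finset.sum_ninvolution Prod.swap
    · intro a
      by_cases h : a.1 = a.2 <;> simp [h, Prod.swap, eq_comm, hT a.1 a.2, CharTwo.add_self_eq_zero]
    · intro a ha
      by_cases h : a.1 = a.2
      · simp [h] at ha
      · intro hc
        exact h (congrArg Prod.fst hc.symm ▸ rfl)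
    · intro a; exact Finset.mem_univ _
    · intro a; exact Prod.swap_swap a
  have h0' : (∑ k, ∑ l, if k = l then 0 else T k l) = 0 := by
    rw [Fintype.sum_prod_type] at h0
    exact h0
  rw [split, h0', add_zero]
  refine Finset.sum_congr rfl fun k _ => ?_
  simp

lemma diag_conj' {n : Type*} [Fintype n] [DecidableEq n]
    (C S : Matrix n n (ZMod 2)) (hS : Sᵀ = S) :
    (C * S * Cᵀ).diag = C *ᵥ S.diag := by
  funext i
  have expand : (C * S * Cᵀ).diag i = ∑ l, ∑ k, C i k * S k l * C i l := by
    simp [Matrix.diag, Matrix.mul_apply, Finset.sum_mul]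
  rw [expand, Finset.sum_comm]
  rw [sum_symm_char2' (fun k l => C i k * S k l * C i l) (by
    intro k l
    have : S k l = S l k := by conv_lhs => rw [← hS, Matrix.transpose_apply]
    ring_nf
    rw [this]
    ring)]
  simp only [Matrix.mulVec, dotProduct, Matrix.diag]
  refine Finset.sum_congr rfl fun k _ => ?_
  have : C i k * C i k = C i k := by
    have := ZMod.pow_card (C i k)
    simpa [pow_two] using (by decide : ∀ x : ZMod 2, x * x = x) (C i k)
  calc C i k * S k k * C i k = (C i k * C i k) * S k k := by ring
    _ = C i k * S k k := by rw [this]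

lemma key_block' {n : Type*} [Fintype n] [DecidableEq n]
    (C D A' B' C' D' : Matrix n n (ZMod 2))
    (h1 : A' * B'ᵀ = B' * A'ᵀ) (h2 : C' * D'ᵀ = D' * C'ᵀ)
    (h3 : A' * D'ᵀ + B' * C'ᵀ = 1) :
    ((C * A' + D * C') * (C * B' + D * D')ᵀ).diag
      = D *ᵥ (C' * D'ᵀ).diag + C *ᵥ (A' * B'ᵀ).diag + (C * Dᵀ).diag := by
  have expand : (C * A' + D * C') * (C * B' + D * D')ᵀ
      = C * (A' * B'ᵀ) * Cᵀ + (C * (A' * D'ᵀ) * Dᵀ + D * (C' * B'ᵀ) * Cᵀ)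
        + D * (C' * D'ᵀ) * Dᵀ := by
    rw [transpose_add, transpose_mul, transpose_mul]
    noncomm_ring
  rw [expand]
  have hmid : (C * (A' * D'ᵀ) * Dᵀ + D * (C' * B'ᵀ) * Cᵀ).diag = (C * Dᵀ).diag := by
    have hsw : (D * (C' * B'ᵀ) * Cᵀ).diag = (C * (B' * C'ᵀ) * Dᵀ).diag := by
      rw [← Matrix.diag_transpose (C * (B' * C'ᵀ) * Dᵀ)]
      simp [transpose_mul, Matrix.mul_assoc]
    rw [Matrix.diag_add, hsw, ← Matrix.diag_add, ← Matrix.add_mul, ← Matrix.mul_add,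
      h3, Matrix.mul_one]
  rw [Matrix.diag_add, Matrix.diag_add, hmid]
  rw [diag_conj' C (A' * B'ᵀ) (by rw [transpose_mul, transpose_transpose, ← h1]),
      diag_conj' D (C' * D'ᵀ) (by rw [transpose_mul, transpose_transpose, ← h2])]
  abel

end AffineActionAux

/-- the map `(σ, m) ↦ σ{m}` defines an action of `Sp(g, F₂)` on
`F₂^{2g}`: one has `(στ){m} = σ{τ{m}}`. -/
theorem affine_action_is_action (g : ℕ) (σ τ : SpMat g)
    (hσ : σ ∈ Matrix.symplecticGroup (Fin g) (ZMod 2))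
    (hτ : τ ∈ Matrix.symplecticGroup (Fin g) (ZMod 2)) (m : Char2 g) :
    affAct (σ * τ) m = affAct σ (affAct τ m) := by
  classical
  set Jm : SpMat g := Matrix.J (Fin g) (ZMod 2) with hJdef
  have hJJ : Jm * Jm = 1 := by
    rw [hJdef, Matrix.J_squared]; exact mat_neg' 1
  have hinv : ∀ ρ : SpMat g, ρ ∈ Matrix.symplecticGroup (Fin g) (ZMod 2) →
      (ρᵀ)⁻¹ = Jm * ρ * Jm := by
    intro ρ hρ
    rw [SymplecticGroup.inv_eq_symplectic_inv _ (SymplecticGroup.transpose_mem hρ),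
      transpose_transpose, ← hJdef, mat_neg']
  have hmem : σ * τ ∈ Matrix.symplecticGroup (Fin g) (ZMod 2) := mul_mem hσ hτ
  set A := σ.toBlocks₁₁ with hA; set B := σ.toBlocks₁₂ with hB
  set C := σ.toBlocks₂₁ with hC; set D := σ.toBlocks₂₂ with hD
  set A' := τ.toBlocks₁₁ with hA'; set B' := τ.toBlocks₁₂ with hB'
  set C' := τ.toBlocks₂₁ with hC'; set D' := τ.toBlocks₂₂ with hD'
  have hσb : σ = Matrix.fromBlocks A B C D := (Matrix.fromBlocks_toBlocks σ).symm
  have hτb : τ = Matrix.fromBlocks A' B' C' D' := (Matrix.fromBlocks_toBlocks τ).symm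
  have hJb : Jm = Matrix.fromBlocks 0 1 1 0 := by
    rw [hJdef, Matrix.J, show (-1 : Matrix (Fin g) (Fin g) (ZMod 2)) = 1 from mat_neg' 1]
  have hτJ : τ * Jm * τᵀ = Jm := (SymplecticGroup.mem_iff.mp hτ)
  have hblocks : Matrix.fromBlocks (B' * A'ᵀ + A' * B'ᵀ) (B' * C'ᵀ + A' * D'ᵀ)
      (D' * A'ᵀ + C' * B'ᵀ) (D' * C'ᵀ + C' * D'ᵀ) = Matrix.fromBlocks 0 1 1 0 := by
    rw [← hJb, ← hτJ, hτb, hJb]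
    simp [Matrix.fromBlocks_multiply, Matrix.fromBlocks_transpose]
  have h1 : B' * A'ᵀ = A' * B'ᵀ := by
    have h := congrArg Matrix.toBlocks₁₁ hblocks
    simp [Matrix.toBlocks_fromBlocks₁₁] at h
    have := congrArg (fun M => B' * A'ᵀ + M) h
    simpa [← add_assoc, mat_add_self'] using this.symm
  have h2 : D' * C'ᵀ = C' * D'ᵀ := by
    have h := congrArg Matrix.toBlocks₂₂ hblocks
    simp [Matrix.toBlocks_fromBlocks₂₂] at h
    have := congrArg (fun M => D' * C'ᵀ + M) h
    simpa [← add_assoc, mat_add_self'] using this.symm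
  have h3 : A' * D'ᵀ + B' * C'ᵀ = 1 := by
    have h := congrArg Matrix.toBlocks₁₂ hblocks
    simp [Matrix.toBlocks_fromBlocks₁₂] at h
    rw [add_comm] at h; exact h
  have hcon : Jm * σ * Jm = Matrix.fromBlocks D C B A := by
    rw [hσb, hJb]
    simp [Matrix.fromBlocks_multiply]
  have hoff : offVec (σ * τ) = (Jm * σ * Jm) *ᵥ offVec τ + offVec σ := by
    have hblk21 : (σ * τ).toBlocks₂₁ = C * A' + D * C' := by
      rw [hσb, hτb]; simp [Matrix.fromBlocks_multiply, Matrix.toBlocks_fromBlocks₂₁]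
    have hblk22 : (σ * τ).toBlocks₂₂ = C * B' + D * D' := by
      rw [hσb, hτb]; simp [Matrix.fromBlocks_multiply, Matrix.toBlocks_fromBlocks₂₂]
    have hblk11 : (σ * τ).toBlocks₁₁ = A * A' + B * C' := by
      rw [hσb, hτb]; simp [Matrix.fromBlocks_multiply, Matrix.toBlocks_fromBlocks₁₁]
    have hblk12 : (σ * τ).toBlocks₁₂ = A * B' + B * D' := by
      rw [hσb, hτb]; simp [Matrix.fromBlocks_multiply, Matrix.toBlocks_fromBlocks₁₂]
    funext x
    rw [hcon]
    cases x with
    | inl i =>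
      have := congrFun (key_block' C D A' B' C' D' h1.symm h2.symm h3) i
      simp only [offVec, Sum.elim_inl, hblk21, hblk22, Matrix.fromBlocks_mulVec,
        Pi.add_apply, Sum.elim_inl]
      rw [this]
      simp [Pi.add_apply]
      rfl
    | inr i =>
      have := congrFun (key_block' A B A' B' C' D' h1.symm h2.symm h3) i
      simp only [offVec, Sum.elim_inr, hblk11, hblk12, Matrix.fromBlocks_mulVec,
        Pi.add_apply, Sum.elim_inr]
      rw [this]
      simp [Pi.add_apply]
      rfl
  unfold affAct
  rw [hinv _ hσ, hinv _ hτ, hinv _ hmem, Matrix.mulVec_add, Matrix.mulVec_mulVec]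
  have hcomp : Jm * σ * Jm * (Jm * τ * Jm) = Jm * (σ * τ) * Jm := by
    simp only [Matrix.mul_assoc]
    rw [← Matrix.mul_assoc Jm Jm (τ * Jm), hJJ, Matrix.one_mul]
  rw [hcomp, hoff]
  abel
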